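/- Fix b > 0, M ≥ 2b, and 0 < ε ≤ b/4. Define the Borel probability measures on [0,M]: ν̃ = (1/2)·δ_{b/2 − √(bε)/2} + (1/2)·δ_M and μ̃ = (1/2 − √(ε/b))·δ_{b/2 − √(bε)/2} + √(ε/b)·δ_{b/2 + √(bε)/2} + (1/2)·δ_M. Then d_W(μ̃,ν̃) ≤ ε, and for every rental duration x ∈ [0,M], (1/2)·(S(x,μ̃) − opt(μ̃)) + (1/2)·(S(x,ν̃) − opt(ν̃)) ≥ √(b·ε)/4. -/

import Mathlib

open MeasureTheory
open scoped Classical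

noncomputable section

/-- Cumulative distribution function `F(t) = μ([0,t])`. -/
def cdf0 (μ : Measure ℝ) (t : ℝ) : ℝ := (μ (Set.Icc 0 t)).toReal

/-- Wasserstein-1 distance between measures on `[0,M]`: `∫₀^M |F(t) - H(t)| dt`. -/
def wassDist (M : ℝ) (μ ν : Measure ℝ) : ℝ :=
  ∫ t in Set.Icc (0:ℝ) M, |cdf0 μ t - cdf0 ν t|

/-- Expected ski-rental cost with buying cost `b`. -/
def skiCost (b x : ℝ) (μ : Measure ℝ) : ℝ :=
  ∫ ξ, (if ξ ≤ x then ξ else b + x) ∂μ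

/-- Optimal ski-rental cost `opt(μ) = inf_{x ∈ [0,M]} S(x,μ)`. -/
def optSki (b M : ℝ) (μ : Measure ℝ) : ℝ := ⨅ x : Set.Icc (0:ℝ) M, skiCost b x.1 μ

lemma my_integrable_dirac {f : ℝ → ℝ} (hf : Measurable f) (p : ℝ) :
    Integrable f (Measure.dirac p) := by
  refine ⟨hf.aestronglyMeasurable, ?_⟩
  rw [HasFiniteIntegral, lintegral_dirac' p (by measurability)]
  exact ENNReal.coe_lt_top

lemma integral_wdirac (f : ℝ → ℝ) (hf : Measurable f) (w p : ℝ) (hw : 0 ≤ w) :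
    ∫ ξ, f ξ ∂(ENNReal.ofReal w • Measure.dirac p) = w * f p := by
  rw [integral_smul_measure, integral_dirac' f p hf.stronglyMeasurable,
    ENNReal.toReal_ofReal hw, smul_eq_mul]

lemma integrable_wdirac {f : ℝ → ℝ} (hf : Measurable f) (w p : ℝ) :
    Integrable f (ENNReal.ofReal w • Measure.dirac p) :=
  (my_integrable_dirac hf p).smul_measure ENNReal.ofReal_ne_top

lemma meas_wdirac_toReal (w p : ℝ) (hw : 0 ≤ w) (S : Set ℝ) (hS : MeasurableSet S) :
    ((ENNReal.ofReal w • Measure.dirac p) S).toReal = if p ∈ S then w else 0 := by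
  rw [Measure.smul_apply, smul_eq_mul, Measure.dirac_apply' _ hS, Set.indicator_apply]
  split_ifs <;> simp [ENNReal.toReal_ofReal hw]

lemma meas_wdirac_ne_top (w p : ℝ) (S : Set ℝ) :
    (ENNReal.ofReal w • Measure.dirac p) S ≠ ⊤ := by
  rw [Measure.smul_apply, smul_eq_mul]
  exact ENNReal.mul_ne_top ENNReal.ofReal_ne_top (measure_ne_top _ _)

set_option maxHeartbeats 2000000 in
/-- Bayesian lower bound of order `√(bε)` for the ski-rental problem under Wasserstein
heterogeneity. -/
theorem ski_rental_wasserstein_lower_bound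
    (M b ε : ℝ) (hb : 0 < b) (hM : 2 * b ≤ M) (hε : 0 < ε) (hε2 : ε ≤ b / 4)
    (νt μt : Measure ℝ)
    (hνt : νt = ENNReal.ofReal (1/2) • Measure.dirac (b / 2 - Real.sqrt (b * ε) / 2) +
                ENNReal.ofReal (1/2) • Measure.dirac M)
    (hμt : μt = ENNReal.ofReal (1/2 - Real.sqrt (ε / b)) •
                  Measure.dirac (b / 2 - Real.sqrt (b * ε) / 2) +
                ENNReal.ofReal (Real.sqrt (ε / b)) •
                  Measure.dirac (b / 2 + Real.sqrt (b * ε) / 2) +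
                ENNReal.ofReal (1/2) • Measure.dirac M) :
    wassDist M μt νt ≤ ε ∧
    ∀ x ∈ Set.Icc (0:ℝ) M,
      (1/2) * (skiCost b x μt - optSki b M μt) +
        (1/2) * (skiCost b x νt - optSki b M νt) ≥
      Real.sqrt (b * ε) / 4 := by
  set s : ℝ := Real.sqrt (b * ε) with hs_def
  set q : ℝ := Real.sqrt (ε / b) with hq_def
  set a : ℝ := b / 2 - s / 2 with ha_def
  set c : ℝ := b / 2 + s / 2 with hc_def
  have hs0 : 0 < s := Real.sqrt_pos.mpr (by positivity)
  have hs2 : s ^ 2 = b * ε := Real.sq_sqrt (by positivity)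
  have hq0 : 0 < q := Real.sqrt_pos.mpr (by positivity)
  have hq : q = s / b := by
    rw [hq_def, hs_def, show ε / b = (b * ε) / b ^ 2 by field_simp,
      Real.sqrt_div (by positivity), Real.sqrt_sq hb.le]
  have hsb : s ≤ b / 2 := by nlinarith [hs2, hs0.le]
  have hq2 : q ≤ 1 / 2 := by rw [hq]; rw [div_le_iff₀ hb]; linarith
  have hqb : q * b = s := by rw [hq]; field_simp
  have hqs : q * s = ε := by rw [hq]; field_simp; nlinarith [hs2]
  have ha0 : 0 < a := by rw [ha_def]; linarith
  have hac : a < c := by rw [ha_def, hc_def]; linarith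
  have hacs : c - a = s := by rw [ha_def, hc_def]; ring
  have hcM : c ≤ M := by rw [hc_def]; linarith
  have hM0 : 0 < M := by linarith
  -- ski cost formulas
  have hf : ∀ x : ℝ, Measurable (fun ξ : ℝ => if ξ ≤ x then ξ else b + x) := fun x =>
    Measurable.ite (measurableSet_le measurable_id measurable_const)
      measurable_id measurable_const
  have Sν : ∀ x : ℝ, skiCost b x νt =
      (1/2) * (if a ≤ x then a else b + x) + (1/2) * (if M ≤ x then M else b + x) := by
    intro x
    rw [hνt, skiCost,
      integral_add_measure (integrable_wdirac (hf x) _ _) (integrable_wdirac (hf x) _ _),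
      integral_wdirac _ (hf x) _ _ (by norm_num), integral_wdirac _ (hf x) _ _ (by norm_num)]
  have Sμ : ∀ x : ℝ, skiCost b x μt =
      (1/2 - q) * (if a ≤ x then a else b + x) + q * (if c ≤ x then c else b + x) +
        (1/2) * (if M ≤ x then M else b + x) := by
    intro x
    rw [hμt, skiCost,
      integral_add_measure ((integrable_wdirac (hf x) _ _).add_measure
        (integrable_wdirac (hf x) _ _)) (integrable_wdirac (hf x) _ _),
      integral_add_measure (integrable_wdirac (hf x) _ _) (integrable_wdirac (hf x) _ _),
      integral_wdirac _ (hf x) _ _ (by linarith), integral_wdirac _ (hf x) _ _ hq0.le,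
      integral_wdirac _ (hf x) _ _ (by norm_num)]
  -- bounds on opt
  have hbddμ : BddBelow (Set.range fun x : Set.Icc (0:ℝ) M => skiCost b x.1 μt) := by
    refine ⟨0, ?_⟩
    rintro _ ⟨x, rfl⟩
    have hx0 : (0:ℝ) ≤ x.1 := x.2.1
    show (0:ℝ) ≤ skiCost b x.1 μt
    rw [Sμ]
    have h1 : (0:ℝ) ≤ 1/2 - q := by linarith
    split_ifs <;> nlinarith [mul_nonneg h1 ha0.le, mul_nonneg h1 (by linarith : (0:ℝ) ≤ b + x.1),
      mul_nonneg hq0.le (by linarith : (0:ℝ) ≤ c),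
      mul_nonneg hq0.le (by linarith : (0:ℝ) ≤ b + x.1)]
  have hbddν : BddBelow (Set.range fun x : Set.Icc (0:ℝ) M => skiCost b x.1 νt) := by
    refine ⟨0, ?_⟩
    rintro _ ⟨x, rfl⟩
    have hx0 : (0:ℝ) ≤ x.1 := x.2.1
    show (0:ℝ) ≤ skiCost b x.1 νt
    rw [Sν]
    split_ifs <;> nlinarith
  have hoptμ : optSki b M μt ≤ b := by
    have h0 : skiCost b 0 μt = b := by
      rw [Sμ 0, if_neg (by linarith), if_neg (by push_neg; linarith), if_neg (by linarith)]
      ring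
    calc optSki b M μt ≤ skiCost b (0:ℝ) μt :=
          ciInf_le hbddμ (⟨0, by constructor <;> linarith⟩ : Set.Icc (0:ℝ) M)
      _ = b := h0
  have hoptν : optSki b M νt ≤ b - s / 2 := by
    have h0 : skiCost b a νt = b - s / 2 := by
      rw [Sν a, if_pos le_rfl, if_neg (by push_neg; rw [ha_def]; linarith)]
      rw [ha_def]; ring
    calc optSki b M νt ≤ skiCost b a νt :=
          ciInf_le hbddν (⟨a, ha0.le, by linarith⟩ : Set.Icc (0:ℝ) M)
      _ = b - s / 2 := h0
  constructor
  · -- Wasserstein bound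
    have hmem : ∀ p t : ℝ, 0 ≤ p → ((p ∈ Set.Icc (0:ℝ) t) ↔ p ≤ t) := fun p t hp => by
      simp [Set.mem_Icc, hp]
    have hcν : ∀ t : ℝ, cdf0 νt t =
        (if a ≤ t then (1:ℝ)/2 else 0) + (if M ≤ t then (1:ℝ)/2 else 0) := by
      intro t
      rw [hνt, cdf0, Measure.add_apply,
        ENNReal.toReal_add (meas_wdirac_ne_top _ _ _) (meas_wdirac_ne_top _ _ _),
        meas_wdirac_toReal _ _ (by norm_num) _ measurableSet_Icc,
        meas_wdirac_toReal _ _ (by norm_num) _ measurableSet_Icc]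
      simp only [hmem a t ha0.le, hmem M t hM0.le]
    have hcμ : ∀ t : ℝ, cdf0 μt t =
        (if a ≤ t then 1/2 - q else 0) + (if c ≤ t then q else 0) +
          (if M ≤ t then (1:ℝ)/2 else 0) := by
      intro t
      rw [hμt, cdf0, Measure.add_apply, Measure.add_apply,
        ENNReal.toReal_add (ENNReal.add_ne_top.mpr
          ⟨meas_wdirac_ne_top _ _ _, meas_wdirac_ne_top _ _ _⟩) (meas_wdirac_ne_top _ _ _),
        ENNReal.toReal_add (meas_wdirac_ne_top _ _ _) (meas_wdirac_ne_top _ _ _),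
        meas_wdirac_toReal _ _ (by linarith) _ measurableSet_Icc,
        meas_wdirac_toReal _ _ hq0.le _ measurableSet_Icc,
        meas_wdirac_toReal _ _ (by norm_num) _ measurableSet_Icc]
      simp only [hmem a t ha0.le, hmem c t (by linarith), hmem M t hM0.le]
    have hpt : ∀ t : ℝ, |cdf0 μt t - cdf0 νt t| =
        Set.indicator (Set.Ico a c) (fun _ => q) t := by
      intro t
      rw [hcμ t, hcν t, Set.indicator_apply]
      rcases le_or_gt a t with h1 | h1
      · rcases le_or_gt c t with h2 | h2
        · have hnin : t ∉ Set.Ico a c := fun h => absurd h.2 (not_lt.mpr h2)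
          simp only [if_pos h1, if_pos h2, if_neg hnin]
          split_ifs <;> rw [abs_of_nonneg (by linarith)] <;> ring
        · have hin : t ∈ Set.Ico a c := Set.mem_Ico.mpr ⟨h1, h2⟩
          simp only [if_pos h1, if_neg (not_le.mpr h2), if_pos hin]
          split_ifs <;> rw [abs_of_nonpos (by linarith)] <;> ring
      · have h2 : t < c := lt_trans h1 hac
        have hnin : t ∉ Set.Ico a c := fun h => absurd h.1 (not_le.mpr h1)
        simp only [if_neg (not_le.mpr h1), if_neg (not_le.mpr h2), if_neg hnin]
        split_ifs <;> rw [abs_of_nonneg (by linarith)] <;> ring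
    have hsub : Set.Ico a c ⊆ Set.Icc (0:ℝ) M := by
      intro t ht
      rw [Set.mem_Ico] at ht
      exact Set.mem_Icc.mpr ⟨by linarith [ht.1], by linarith [ht.2]⟩
    rw [wassDist, integral_congr_ae (Filter.Eventually.of_forall fun t => hpt t),
      setIntegral_indicator measurableSet_Ico, setIntegral_const,
      Set.inter_eq_self_of_subset_right hsub,
      measureReal_def, Real.volume_Ico, hacs, ENNReal.toReal_ofReal hs0.le, smul_eq_mul]
    nlinarith [hqs]
  · -- regret bound
    intro x hx
    obtain ⟨hx0, hxM⟩ := hx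
    have key : (1/2) * (skiCost b x μt - b) + (1/2) * (skiCost b x νt - (b - s/2)) ≥
        s / 4 := by
      rw [Sμ x, Sν x]
      rcases le_or_gt a x with h1 | h1
      · rcases le_or_gt c x with h2 | h2
        · rcases le_or_gt M x with h3 | h3
          · -- x = M case
            simp only [if_pos h1, if_pos h2, if_pos h3]
            have hxM' : x = M := le_antisymm hxM h3
            nlinarith [mul_nonneg (by linarith : (0:ℝ) ≤ 1/2 - q) ha0.le,
              mul_nonneg hq0.le (by linarith : (0:ℝ) ≤ c)]
          · -- c ≤ x < M
            simp only [if_pos h1, if_pos h2, if_neg (not_le.mpr h3)]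
            rw [ha_def, hc_def] at *
            nlinarith [mul_nonneg hq0.le (by linarith : (0:ℝ) ≤ x - (b/2 + s/2)), hqb, hqs]
        · rcases le_or_gt M x with h3 | h3
          · exact absurd (le_trans hcM h3) (not_le.mpr h2)
          · -- a ≤ x < c
            simp only [if_pos h1, if_neg (not_le.mpr h2), if_neg (not_le.mpr h3)]
            rw [ha_def] at *
            nlinarith [mul_nonneg hq0.le (by linarith : (0:ℝ) ≤ x - (b/2 - s/2)), hqb, hqs]
      · -- x < a
        have h2 : x < c := lt_trans h1 hac
        have h3 : x < M := lt_of_lt_of_le h2 hcM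
        simp only [if_neg (not_le.mpr h1), if_neg (not_le.mpr h2), if_neg (not_le.mpr h3)]
        nlinarith
    linarith [key, hoptμ, hoptν]

end
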